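/- Let r ≥ 1 and n ≥ 1 be integers, a_r a real number, and l ≥ 0 an integer with 2l ≤ n+1. Then A(2l, n) + [𝔄(2l, n), 𝔸_r] = 0, where [·,·] is the Lie bracket of vector fields. (Even case of the lemma on eliminating A-terms by the homological operator of 𝔸_r.) -/

import Mathlib

/-- Monomial `x^a * y^b` for integer exponents, zero if an exponent is negative. -/
noncomputable def M (a b : ℤ) : ℝ × ℝ → ℝ :=
  fun p => if 0 ≤ a ∧ 0 ≤ b then p.1 ^ a.toNat * p.2 ^ b.toNat else 0

/-- The vector field `A(l,k)`. -/
noncomputable def A (l k : ℤ) : ℝ × ℝ → ℝ × ℝ :=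
  fun p => (((k : ℝ) - (l : ℝ) + 1) / ((k : ℝ) + 2) * M (l + 1) (k - l) p,
            -(((l : ℝ) + 1) / ((k : ℝ) + 2)) * M l (k - l + 1) p)

/-- The vector field `B(l,k)`. -/
noncomputable def B (l k : ℤ) : ℝ × ℝ → ℝ × ℝ :=
  fun p => (M (l + 1) (k - l) p, M l (k - l + 1) p)

/-- The scalar monomial function `Z(l,k)`. -/
noncomputable def Z (l k : ℤ) : ℝ × ℝ → ℝ := M l (k - l)

/-- Lie bracket of planar vector fields: `[X,Y](p) = DY(p)(X(p)) - DX(p)(Y(p))`. -/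
noncomputable def lieBracket (X Y : ℝ × ℝ → ℝ × ℝ) : ℝ × ℝ → ℝ × ℝ :=
  fun p => fderiv ℝ Y p (X p) - fderiv ℝ X p (Y p)

/-- Pochhammer-type product `(a)^n_b = a (a+b) (a+2b) ⋯ (a+(n-1)b)`. -/
noncomputable def poch (a b : ℝ) (n : ℕ) : ℝ := ∏ j ∈ Finset.range n, (a + (j : ℝ) * b)

/-- The vector field `𝔸_r = A(1,0) + a_r • A(-1,r)`, i.e. `(a_r y^{r+1}, -x)`. -/
noncomputable def bbA (r : ℤ) (ar : ℝ) : ℝ × ℝ → ℝ × ℝ :=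
  fun p => A 1 0 p + ar • A (-1) r p

/-- The vector field `𝔄(m,n)` used to eliminate A-terms. -/
noncomputable def frakA (r : ℤ) (ar : ℝ) (m n : ℤ) : ℝ × ℝ → ℝ × ℝ :=
  fun p => ∑ i ∈ Finset.range ((m / 2).toNat + 1),
    (-(ar ^ i * poch (m : ℝ) (-2) i * ((n : ℝ) + (i : ℝ) * (r : ℝ) + 2)) /
      (((n : ℝ) + 2) * poch ((n : ℝ) - (m : ℝ) + 2) ((r : ℝ) + 2) (i + 1))) •
    A (m - (2 * (i : ℤ) + 1)) (n + (i : ℤ) * r) p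

open ContinuousLinearMap in
/-- derivative of the monomial `x^A y^B` -/
lemma hasFDerivAt_mono (A B : ℕ) (p : ℝ×ℝ) :
    HasFDerivAt (fun q : ℝ×ℝ => q.1^A * q.2^B)
      ((((A:ℝ) * p.1^(A-1) * p.2^B) • fst ℝ ℝ ℝ) +
       (((B:ℝ) * p.1^A * p.2^(B-1)) • snd ℝ ℝ ℝ)) p := by
  have h1 : HasFDerivAt (fun q : ℝ×ℝ => q.1^A) (((A:ℝ)*p.1^(A-1)) • fst ℝ ℝ ℝ) p :=
    (hasDerivAt_pow A p.1).comp_hasFDerivAt p hasFDerivAt_fst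
  have h2 : HasFDerivAt (fun q : ℝ×ℝ => q.2^B) (((B:ℝ)*p.2^(B-1)) • snd ℝ ℝ ℝ) p :=
    (hasDerivAt_pow B p.2).comp_hasFDerivAt p hasFDerivAt_snd
  have := h1.mul h2
  refine this.congr_fderiv ?_
  ext v <;> simp <;> ring

lemma M_neg_left {a : ℤ} (b : ℤ) (h : a < 0) (p : ℝ×ℝ) : M a b p = 0 := by
  simp [M]; intro h'; omega

lemma M_neg_right (a : ℤ) {b : ℤ} (h : b < 0) (p : ℝ×ℝ) : M a b p = 0 := by
  simp [M]; intro _ h'; omega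

lemma M_eq {a b : ℤ} (ha : 0 ≤ a) (hb : 0 ≤ b) (p : ℝ×ℝ) :
    M a b p = p.1 ^ a.toNat * p.2 ^ b.toNat := by simp [M, ha, hb]

noncomputable def MD (a b : ℤ) (p : ℝ × ℝ) : ℝ × ℝ →L[ℝ] ℝ :=
  (((a:ℝ) * M (a-1) b p) • ContinuousLinearMap.fst ℝ ℝ ℝ) +
  (((b:ℝ) * M a (b-1) p) • ContinuousLinearMap.snd ℝ ℝ ℝ)

lemma MD_apply (a b : ℤ) (p v : ℝ×ℝ) :
    MD a b p v = (a:ℝ) * M (a-1) b p * v.1 + (b:ℝ) * M a (b-1) p * v.2 := by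
  simp [MD]

lemma hasFDerivAt_M (a b : ℤ) (p : ℝ×ℝ) : HasFDerivAt (M a b) (MD a b p) p := by
  by_cases h : 0 ≤ a ∧ 0 ≤ b
  · obtain ⟨ha, hb⟩ := h
    have hM : M a b = fun q : ℝ×ℝ => q.1 ^ a.toNat * q.2 ^ b.toNat := by
      funext q; exact M_eq ha hb q
    rw [hM, MD]
    convert hasFDerivAt_mono a.toNat b.toNat p using 2
    · rcases eq_or_lt_of_le ha with h0 | h0
      · simp [← h0, M_neg_left, show (-1:ℤ) < 0 by norm_num]
      · rw [M_eq (by omega) hb]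
        rw [show ((a.toNat:ℝ)) = (a:ℝ) by exact_mod_cast congrArg Int.cast (Int.toNat_of_nonneg ha),
          show (a-1).toNat = a.toNat - 1 by omega]
        ring
    · rcases eq_or_lt_of_le hb with h0 | h0
      · simp [← h0, M_neg_right, show (-1:ℤ) < 0 by norm_num]
      · rw [M_eq ha (by omega)]
        rw [show ((b.toNat:ℝ)) = (b:ℝ) by exact_mod_cast congrArg Int.cast (Int.toNat_of_nonneg hb),
          show (b-1).toNat = b.toNat - 1 by omega]
        ring
  · have hM : M a b = fun _ : ℝ×ℝ => (0:ℝ) := by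
      funext q; simp [M, h]
    have hMD : MD a b p = 0 := by
      rcases not_and_or.mp h with h' | h' <;> push_neg at h'
      · rw [MD, M_neg_left b (by omega), M_neg_left (b-1) (by omega)]; simp
      · rw [MD, M_neg_right (a-1) (by omega), M_neg_right a (by omega)]; simp
    rw [hM, hMD]
    exact hasFDerivAt_const 0 p

lemma M_mul (a b c d : ℤ) (hc : 0 ≤ c) (hd : 0 ≤ d) (ha : 0 ≤ a ∨ a + c < 0)
    (hb : 0 ≤ b ∨ b + d < 0) (p : ℝ×ℝ) :
    M a b p * M c d p = M (a+c) (b+d) p := by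
  by_cases h : 0 ≤ a ∧ 0 ≤ b
  · obtain ⟨ha', hb'⟩ := h
    rw [M_eq ha' hb', M_eq hc hd, M_eq (by omega) (by omega),
      show (a+c).toNat = a.toNat + c.toNat by omega,
      show (b+d).toNat = b.toNat + d.toNat by omega, pow_add, pow_add]
    ring
  · rcases not_and_or.mp h with h' | h' <;> push_neg at h'
    · have h2 : a + c < 0 := by rcases ha with h3 | h3; omega; exact h3
      rw [M_neg_left b h' p, M_neg_left (b+d) h2 p]; ring
    · have h2 : b + d < 0 := by rcases hb with h3 | h3; omega; exact h3
      rw [M_neg_right a h' p, M_neg_right (a+c) h2 p]; ring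

open ContinuousLinearMap in
noncomputable def AD (l k : ℤ) (p : ℝ×ℝ) : ℝ×ℝ →L[ℝ] ℝ×ℝ :=
  ((((k : ℝ) - (l : ℝ) + 1) / ((k : ℝ) + 2)) • MD (l+1) (k-l) p).prod
    ((-(((l : ℝ) + 1) / ((k : ℝ) + 2))) • MD l (k-l+1) p)

lemma hasFDerivAt_A (l k : ℤ) (p : ℝ×ℝ) : HasFDerivAt (A l k) (AD l k p) p :=
  HasFDerivAt.prodMk ((hasFDerivAt_M (l+1) (k-l) p).const_mul _) ((hasFDerivAt_M l (k-l+1) p).const_mul _)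

@[simp] lemma fderiv_A (l k : ℤ) (p : ℝ×ℝ) : fderiv ℝ (A l k) p = AD l k p :=
  (hasFDerivAt_A l k p).fderiv

lemma AD_apply (l k : ℤ) (p v : ℝ×ℝ) :
    AD l k p v = ((((k : ℝ) - (l : ℝ) + 1) / ((k : ℝ) + 2)) *
        ((((l:ℤ)+1:ℤ):ℝ) * M l (k-l) p * v.1 + (((k-l:ℤ):ℝ)) * M (l+1) (k-l-1) p * v.2),
      (-(((l : ℝ) + 1) / ((k : ℝ) + 2))) *
        (((l:ℝ)) * M (l-1) (k-l+1) p * v.1 + (((k-l+1:ℤ):ℝ)) * M l (k-l) p * v.2)) := by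
  simp only [AD, MD_apply, ContinuousLinearMap.prod_apply, ContinuousLinearMap.coe_smul',
    Pi.smul_apply, smul_eq_mul]
  rw [show l+1-1 = l by ring, show k-l+1-1 = k-l by ring]

lemma bbA_eq (r : ℤ) (ar : ℝ) (hr : 1 ≤ r) :
    bbA r ar = fun q => (ar * M 0 (r+1) q, (-1:ℝ) * M 1 0 q) := by
  have hr2 : ((r:ℝ)+2) ≠ 0 := by
    have : (1:ℝ) ≤ (r:ℝ) := by exact_mod_cast hr
    linarith
  funext q
  simp only [bbA, A, Prod.smul_mk, Prod.mk_add_mk]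
  rw [M_neg_right (1+1) (show (0:ℤ)-1 < 0 by norm_num),
    M_neg_left (r - -1 + 1) (show (-1:ℤ) < 0 by norm_num),
    show (-1:ℤ)+1 = 0 by ring, show r - -1 = r + 1 by ring,
    show (0:ℤ) - 1 + 1 = 0 by ring]
  push_cast
  rw [Prod.ext_iff]
  constructor
  · show _ = ar * M 0 (r+1) q
    rw [show (r:ℝ) - -1 + 1 = (r:ℝ) + 2 by ring, div_self hr2, smul_eq_mul]
    ring
  · simp

noncomputable def bbAD (r : ℤ) (ar : ℝ) (p : ℝ×ℝ) : ℝ×ℝ →L[ℝ] ℝ×ℝ :=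
  ((ar • MD 0 (r+1) p).prod ((-1:ℝ) • MD 1 0 p))

lemma hasFDerivAt_bbA (r : ℤ) (ar : ℝ) (hr : 1 ≤ r) (p : ℝ×ℝ) :
    HasFDerivAt (bbA r ar) (bbAD r ar p) p := by
  rw [bbA_eq r ar hr]
  exact HasFDerivAt.prodMk ((hasFDerivAt_M 0 (r+1) p).const_mul _) ((hasFDerivAt_M 1 0 p).const_mul _)

lemma fderiv_bbA (r : ℤ) (ar : ℝ) (hr : 1 ≤ r) (p : ℝ×ℝ) :
    fderiv ℝ (bbA r ar) p = bbAD r ar p :=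
  (hasFDerivAt_bbA r ar hr p).fderiv

lemma bbAD_apply (r : ℤ) (ar : ℝ) (p v : ℝ×ℝ) :
    bbAD r ar p v = (ar * ((r:ℝ)+1) * M 0 r p * v.2, -v.1) := by
  simp only [bbAD, MD_apply, ContinuousLinearMap.prod_apply, ContinuousLinearMap.coe_smul',
    Pi.smul_apply, smul_eq_mul]
  rw [M_neg_left (r+1) (show (0:ℤ)-1 < 0 by norm_num),
    show r+1-1 = r by ring, show (1:ℤ)-1 = 0 by ring,
    M_neg_right 1 (show (0:ℤ)-1 < 0 by norm_num) p,
    show M 0 0 p = 1 by simp [M], Prod.ext_iff]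
  push_cast
  constructor <;> ring

lemma bracket_A (l k r : ℤ) (ar : ℝ) (p : ℝ×ℝ) (hl : -1 ≤ l) (hk : 1 ≤ k)
    (hkl : 0 ≤ k - l) (hr : 1 ≤ r) :
    lieBracket (A l k) (bbA r ar) p
      = ((k:ℝ) - (l:ℝ) + 1) • A (l+1) k p
        + (-(ar * ((l:ℝ)+1) * ((k:ℝ)+(r:ℝ)+2) / ((k:ℝ)+2))) • A (l-1) (k+r) p := by
  have hkR : (1:ℝ) ≤ (k:ℝ) := by exact_mod_cast hk
  have hrR : (1:ℝ) ≤ (r:ℝ) := by exact_mod_cast hr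
  have hk2 : ((k:ℝ)+2) ≠ 0 := by linarith
  have hkr2 : ((k:ℝ)+(r:ℝ)+2) ≠ 0 := by linarith
  have h1 : M l (k-l+1) p * M 0 r p = M l (k-l+r+1) p := by
    have := M_mul l (k-l+1) 0 r (by omega) (by omega) (by omega) (by omega) p
    rw [show l+0 = l by ring, show k-l+1+r = k-l+r+1 by ring] at this
    exact this
  have h2 : M l (k-l) p * M 0 (r+1) p = M l (k-l+r+1) p := by
    have := M_mul l (k-l) 0 (r+1) (by omega) (by omega) (by omega) (by omega) p
    rw [show l+0 = l by ring, show k-l+(r+1) = k-l+r+1 by ring] at this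
    exact this
  have h3 : M (l+1) (k-l-1) p * M 1 0 p = M (l+2) (k-l-1) p := by
    have := M_mul (l+1) (k-l-1) 1 0 (by omega) (by omega) (by omega) (by omega) p
    rw [show l+1+1 = l+2 by ring, show k-l-1+0 = k-l-1 by ring] at this
    exact this
  have h4 : M (l-1) (k-l+1) p * M 0 (r+1) p = M (l-1) (k-l+r+2) p := by
    have := M_mul (l-1) (k-l+1) 0 (r+1) (by omega) (by omega) (by omega) (by omega) p
    rw [show l-1+0 = l-1 by ring, show k-l+1+(r+1) = k-l+r+2 by ring] at this
    exact this
  have h5 : ((l:ℝ)+1) * (M l (k-l) p * M 1 0 p) = ((l:ℝ)+1) * M (l+1) (k-l) p := by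
    rcases (by omega : l = -1 ∨ 0 ≤ l) with h | h
    · subst h; norm_num
    · congr 1
      have := M_mul l (k-l) 1 0 (by omega) (by omega) (by omega) (by omega) p
      rw [show k-l+0 = k-l by ring] at this
      exact this
  simp only [lieBracket, fderiv_bbA r ar hr, fderiv_A, bbAD_apply, AD_apply]
  rw [bbA_eq r ar hr]
  simp only [A, Prod.smul_mk, Prod.mk_add_mk, Prod.mk_sub_mk, smul_eq_mul, Prod.mk.injEq]
  rw [show l+1+1 = l+2 by ring, show k-(l+1)+1 = k-l by ring, show k-(l+1) = k-l-1 by ring,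
    show l-1+1 = l by ring, show k+r-(l-1)+1 = k-l+r+2 by ring,
    show k+r-(l-1) = k-l+r+1 by ring]
  have hinv : ((k:ℝ)+(r:ℝ)+2) * ((k:ℝ)+(r:ℝ)+2)⁻¹ = 1 := mul_inv_cancel₀ hkr2
  push_cast
  constructor
  · linear_combination (ar*((r:ℝ)+1)*(-(((l:ℝ)+1)/((k:ℝ)+2)))) * h1
      + (-ar*(((k:ℝ)-(l:ℝ)+1)/((k:ℝ)+2))*((l:ℝ)+1)) * h2
      + ((((k:ℝ)-(l:ℝ)+1)/((k:ℝ)+2))*((k:ℝ)-(l:ℝ))) * h3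
      + (ar*((l:ℝ)+1)*((k:ℝ)+(r:ℝ)-(l:ℝ)+2)/((k:ℝ)+2) * M l (k-l+r+1) p) * hinv
  · linear_combination (-ar*(-(((l:ℝ)+1)/((k:ℝ)+2)))*(l:ℝ)) * h4
      + (-(((k:ℝ)-(l:ℝ)+1)/((k:ℝ)+2))) * h5
      + (-(ar*(l:ℝ)*((l:ℝ)+1)/((k:ℝ)+2)) * M (l-1) (k-l+r+2) p) * hinv

lemma poch_succ (a b : ℝ) (n : ℕ) : poch a b (n+1) = poch a b n * (a + (n:ℝ)*b) :=
  Finset.prod_range_succ _ _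

lemma poch_pos {a b : ℝ} (ha : 0 < a) (hb : 0 ≤ b) (n : ℕ) : 0 < poch a b n :=
  Finset.prod_pos fun j _ => by nlinarith [mul_nonneg (by positivity : (0:ℝ) ≤ (j:ℝ)) hb]

lemma lieBracket_sum (N : ℕ) (c : ℕ → ℝ) (li ki : ℕ → ℤ) (r : ℤ) (ar : ℝ) (hr : 1 ≤ r)
    (p : ℝ×ℝ) :
    lieBracket (fun q => ∑ i ∈ Finset.range N, c i • A (li i) (ki i) q) (bbA r ar) p
      = ∑ i ∈ Finset.range N, c i • lieBracket (A (li i) (ki i)) (bbA r ar) p := by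
  have hF : HasFDerivAt (fun q => ∑ i ∈ Finset.range N, c i • A (li i) (ki i) q)
      (∑ i ∈ Finset.range N, c i • AD (li i) (ki i) p) p :=
    HasFDerivAt.fun_sum fun i _ => (hasFDerivAt_A _ _ p).const_smul (c i)
  simp only [lieBracket, hF.fderiv, fderiv_bbA r ar hr, fderiv_A]
  rw [map_sum, ContinuousLinearMap.sum_apply, ← Finset.sum_sub_distrib]
  refine Finset.sum_congr rfl fun i _ => ?_
  rw [map_smul, ContinuousLinearMap.smul_apply, ← smul_sub]

noncomputable def Ccoef (r n : ℤ) (ar : ℝ) (l : ℕ) (i : ℕ) : ℝ :=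
  -(ar ^ i * poch ((2*(l:ℤ) : ℤ) : ℝ) (-2) i * ((n : ℝ) + (i : ℝ) * (r : ℝ) + 2)) /
    (((n : ℝ) + 2) * poch ((n : ℝ) - ((2*(l:ℤ) : ℤ) : ℝ) + 2) ((r : ℝ) + 2) (i + 1))

noncomputable def ecoef (r n : ℤ) (l : ℕ) (i : ℕ) : ℝ :=
  (n:ℝ) + (i:ℝ)*(r:ℝ) - 2*(l:ℝ) + 2*(i:ℝ) + 2

noncomputable def Gfun (r n : ℤ) (ar : ℝ) (l : ℕ) (p : ℝ×ℝ) (i : ℕ) : ℝ×ℝ :=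
  (Ccoef r n ar l i * ecoef r n l i) • A (2*(l:ℤ) - 2*(i:ℤ)) (n + (i:ℤ)*r) p

lemma coef_step (r n : ℤ) (ar : ℝ) (l i : ℕ) (hr : 1 ≤ r) (hn : 1 ≤ n)
    (hl : 2*(l:ℤ) ≤ n + 1) :
    Ccoef r n ar l i * (-(ar * (((2*(l:ℤ) - (2*(i:ℤ)+1) : ℤ):ℝ)+1) *
        (((n + (i:ℤ)*r : ℤ):ℝ)+(r:ℝ)+2) / (((n + (i:ℤ)*r : ℤ):ℝ)+2)))
      = -(Ccoef r n ar l (i+1) * ecoef r n l (i+1)) := by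
  have hrR : (1:ℝ) ≤ (r:ℝ) := by exact_mod_cast hr
  have hnR : (1:ℝ) ≤ (n:ℝ) := by exact_mod_cast hn
  have hlR : 2*(l:ℝ) ≤ (n:ℝ)+1 := by exact_mod_cast hl
  have hiR : (0:ℝ) ≤ (i:ℝ) := Nat.cast_nonneg i
  unfold Ccoef ecoef
  rw [poch_succ ((2*(l:ℤ) : ℤ) : ℝ) (-2) i, show (i+1)+1 = (i+1)+1 from rfl,
    poch_succ ((n : ℝ) - ((2*(l:ℤ) : ℤ) : ℝ) + 2) ((r:ℝ)+2) (i+1)]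
  have P1 : 0 < poch ((n:ℝ) - ((2*(l:ℤ) : ℤ) : ℝ) + 2) ((r:ℝ)+2) (i+1) := by
    apply poch_pos _ (by linarith)
    push_cast
    linarith
  have hn2 : ((n:ℝ)+2) ≠ 0 := by linarith
  have hd1 : ((n:ℝ) + (i:ℝ)*(r:ℝ) + 2) ≠ 0 := by nlinarith
  have hd2 : ((n:ℝ) - ((2*(l:ℤ) : ℤ) : ℝ) + 2 + ((i:ℝ)+1)*((r:ℝ)+2)) ≠ 0 := by
    push_cast
    nlinarith
  push_cast at P1 hd1 hd2 ⊢
  have hd3 : (n:ℝ) - 2 * (l:ℝ) + 2 + ((r:ℝ) + 2) * ((i:ℝ) + 1) ≠ 0 := by rw [mul_comm ((r:ℝ) + 2)]; exact hd2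
  field_simp
  ring

lemma A_neg2 (k : ℤ) (p : ℝ×ℝ) : A (-2) k p = 0 := by
  simp only [A]
  rw [M_neg_left (k - -2) (show (-2:ℤ)+1 < 0 by norm_num) p,
    M_neg_left (k - -2 + 1) (show (-2:ℤ) < 0 by norm_num) p]
  simp [Prod.ext_iff]

/-- Even case: `A(2l,n) + [𝔄(2l,n), 𝔸_r] = 0`. -/
theorem stmt4 (r n : ℤ) (ar : ℝ) (l : ℕ) (hr : 1 ≤ r) (hn : 1 ≤ n)
    (hl : 2 * (l : ℤ) ≤ n + 1) :
    (fun p => A (2 * (l : ℤ)) n p + lieBracket (frakA r ar (2 * (l : ℤ)) n) (bbA r ar) p)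
      = fun _ => (0 : ℝ × ℝ) := by
  funext p
  have hrR : (1:ℝ) ≤ (r:ℝ) := by exact_mod_cast hr
  have hnR : (1:ℝ) ≤ (n:ℝ) := by exact_mod_cast hn
  have hlR : 2*(l:ℝ) ≤ (n:ℝ)+1 := by exact_mod_cast hl
  have hn2 : ((n:ℝ)+2) ≠ 0 := by linarith
  have hfrak : frakA r ar (2*(l:ℤ)) n
      = fun q => ∑ i ∈ Finset.range (l+1),
          Ccoef r n ar l i • A (2*(l:ℤ) - (2*(i:ℤ)+1)) (n + (i:ℤ)*r) q := by
    funext q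
    simp only [frakA, Ccoef]
    rw [show ((2*(l:ℤ))/2).toNat = l from by omega]
  have hsum := lieBracket_sum (l+1) (Ccoef r n ar l)
    (fun i => 2*(l:ℤ) - (2*(i:ℤ)+1)) (fun i => n + (i:ℤ)*r) r ar hr p
  have key : ∀ i ∈ Finset.range (l+1),
      Ccoef r n ar l i • lieBracket (A (2*(l:ℤ) - (2*(i:ℤ)+1)) (n + (i:ℤ)*r)) (bbA r ar) p
        = Gfun r n ar l p i - Gfun r n ar l p (i+1) := by
    intro i hi
    have hil : i ≤ l := Nat.lt_succ_iff.mp (Finset.mem_range.mp hi)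
    have hir : 0 ≤ (i:ℤ)*r := mul_nonneg (Int.natCast_nonneg i) (by omega)
    rw [bracket_A (2*(l:ℤ) - (2*(i:ℤ)+1)) (n + (i:ℤ)*r) r ar p
      (by omega) (by linarith [hn]) (by have : (0:ℤ) ≤ (i:ℤ) := Int.natCast_nonneg i; linarith) hr]
    rw [smul_add, smul_smul, smul_smul,
      show 2*(l:ℤ) - (2*(i:ℤ)+1) + 1 = 2*(l:ℤ) - 2*(i:ℤ) from by ring,
      show 2*(l:ℤ) - (2*(i:ℤ)+1) - 1 = 2*(l:ℤ) - 2*((i:ℤ)+1) from by ring,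
      show n + (i:ℤ)*r + r = n + ((i:ℤ)+1)*r from by ring]
    have e1 : Ccoef r n ar l i * (((n + (i:ℤ)*r : ℤ):ℝ) - ((2*(l:ℤ) - (2*(i:ℤ)+1) : ℤ):ℝ) + 1)
        = Ccoef r n ar l i * ecoef r n l i := by
      simp only [ecoef]; push_cast; ring
    have e2 := coef_step r n ar l i hr hn hl
    rw [e1, e2]
    simp only [Gfun]
    rw [show ((i+1:ℕ):ℤ) = (i:ℤ)+1 from by push_cast; ring]
    rw [neg_smul]
    abel
  have hC0 : Ccoef r n ar l 0 * ecoef r n l 0 = -1 := by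
    simp only [Ccoef, ecoef, poch, zero_add, Finset.range_zero, Finset.prod_empty, Finset.prod_range_one]
    push_cast
    have h2l : ((n:ℝ) - 2*(l:ℝ) + 2) ≠ 0 := by linarith
    field_simp
    ring_nf at h2l ⊢
    field_simp
    ring
  have hG0 : Gfun r n ar l p 0 = -(A (2*(l:ℤ)) n p) := by
    simp only [Gfun, hC0]
    rw [show ((0:ℕ):ℤ) = (0:ℤ) from rfl,
      show 2*(l:ℤ) - 2*(0:ℤ) = 2*(l:ℤ) from by ring,
      show n + (0:ℤ)*r = n from by ring, neg_one_smul]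
  have hGl : Gfun r n ar l p (l+1) = 0 := by
    simp only [Gfun]
    rw [show 2*(l:ℤ) - 2*((l+1:ℕ):ℤ) = -2 from by push_cast; ring, A_neg2, smul_zero]
  rw [hfrak, hsum, Finset.sum_congr rfl key, Finset.sum_range_sub' (Gfun r n ar l p), hG0, hGl]
  abel
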